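/- Assume μ(S,x) satisfies ∂μ/∂S > 0 and d'(x) - ∂μ/∂x(S,x) > 0 for all relevant (S,x) (hypothesis H3 case λ₀ < λ₁). Then the equation μ(S,x) = d(x) implicitly defines a strictly increasing function S = φ(x) with φ(0) = λ₀, and since γ(x) = S_in - x d(x)/D is strictly decreasing with γ(0) = S_in, the system φ(x) = γ(x) has exactly one solution x > 0 if λ₀ < S_in, and no solution x ≥ 0 with γ(x) = φ(x) and x > 0 if λ₀ > S_in. -/

import Mathlib

open Set

theorem stmt7 (μ μS μx : ℝ → ℝ → ℝ) (d d' φ : ℝ → ℝ)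
    (D Sin lam0 D₁ : ℝ) (hD : 0 < D) (hSin : 0 < Sin) (hlam0 : 0 ≤ lam0)
    -- partial derivatives of μ and derivative of d
    (hμS : ∀ S x, HasDerivAt (fun s => μ s x) (μS S x) S)
    (hμx : ∀ S x, HasDerivAt (fun y => μ S y) (μx S x) x)
    (hd : ∀ x, HasDerivAt d (d' x) x)
    -- sign conditions (H1, H2, H3 in the case λ₀ < λ₁)
    (hμSpos : ∀ S x, 0 < μS S x)
    (hμxneg : ∀ S x, μx S x < 0)
    (hd'neg : ∀ x ≥ (0:ℝ), d' x < 0)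
    (hxd : ∀ x ≥ (0:ℝ), 0 < d x + x * d' x)
    (hdD : ∀ x ≥ (0:ℝ), d x ≤ D)
    (hdlow : 0 < D₁ ∧ ∀ x ≥ (0:ℝ), D₁ ≤ d x)
    (hH3 : ∀ S x, 0 ≤ x → μx S x < d' x)
    -- φ is defined implicitly by μ(φ(x),x) = d(x), and is continuous
    (hφ : ∀ x ≥ (0:ℝ), μ (φ x) x = d x)
    (hφc : ContinuousOn φ (Ici 0))
    (hφ0 : φ 0 = lam0)
    -- γ
    (γ : ℝ → ℝ) (hγ : ∀ x, γ x = Sin - x * d x / D) :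
    StrictMonoOn φ (Ici 0) ∧
    StrictAntiOn γ (Ici 0) ∧ γ 0 = Sin ∧
    (lam0 < Sin → ∃! x : ℝ, 0 < x ∧ φ x = γ x) ∧
    (Sin < lam0 → ¬ ∃ x : ℝ, 0 < x ∧ φ x = γ x) := by
  obtain ⟨hD₁, hdlow⟩ := hdlow
  -- μ strictly increasing in S
  have hmonoS : ∀ x, StrictMono (fun S => μ S x) := by
    intro x
    apply strictMono_of_deriv_pos
    intro S
    rw [(hμS S x).deriv]
    exact hμSpos S x
  -- F(S,·) = μ S · - d strictly decreasing on Ici 0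
  have hantiF : ∀ S, StrictAntiOn (fun x => μ S x - d x) (Ici 0) := by
    intro S
    apply strictAntiOn_of_deriv_neg (convex_Ici 0)
    · exact (Continuous.sub
        (continuous_iff_continuousAt.2 fun x => (hμx S x).continuousAt)
        (continuous_iff_continuousAt.2 fun x => (hd x).continuousAt)).continuousOn
    · intro x hx
      rw [interior_Ici] at hx
      rw [HasDerivAt.deriv (f := fun x => μ S x - d x) ((hμx S x).sub (hd x))]
      linarith [hH3 S x hx.le]
  -- x * d x strictly increasing on Ici 0
  have hxdmono : StrictMonoOn (fun x => x * d x) (Ici 0) := by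
    apply strictMonoOn_of_deriv_pos (convex_Ici 0)
    · exact (continuous_id.mul
        (continuous_iff_continuousAt.2 fun x => (hd x).continuousAt)).continuousOn
    · intro x hx
      rw [interior_Ici] at hx
      have h1 : HasDerivAt (fun x => x * d x) (1 * d x + x * d' x) x :=
        (hasDerivAt_id x).mul (hd x)
      rw [h1.deriv]
      have := hxd x hx.le
      linarith
  -- φ strictly mono
  have hφmono : StrictMonoOn φ (Ici 0) := by
    intro a ha b hb hab
    by_contra hle
    push_neg at hle
    have h1 : μ (φ a) b - d b < μ (φ a) a - d a := hantiF (φ a) ha hb hab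
    rw [hφ a ha] at h1
    have h2 : μ (φ b) b ≤ μ (φ a) b := by
      rcases eq_or_lt_of_le hle with h | h
      · rw [h]
      · exact (hmonoS b h).le
    rw [hφ b hb] at h2
    linarith
  -- γ strictly anti
  have hγanti : StrictAntiOn γ (Ici 0) := by
    intro a ha b hb hab
    rw [hγ a, hγ b]
    have := hxdmono ha hb hab
    have h2 : a * d a / D < b * d b / D := by
      apply div_lt_div_of_pos_right (by exact this) hD
    linarith
  have hγ0 : γ 0 = Sin := by rw [hγ]; ring
  refine ⟨hφmono, hγanti, hγ0, ?_, ?_⟩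
  · -- existence and uniqueness when lam0 < Sin
    intro hlt
    -- h = φ - γ strictly increasing, continuous on Ici 0
    set h : ℝ → ℝ := fun x => φ x - γ x with hh
    have hγcont : Continuous γ := by
      have : Continuous d := continuous_iff_continuousAt.2 fun x => (hd x).continuousAt
      have : Continuous (fun x => Sin - x * d x / D) := by fun_prop
      exact (funext hγ ▸ this)
    have hhc : ContinuousOn h (Ici 0) := hφc.sub hγcont.continuousOn
    have hhmono : StrictMonoOn h (Ici 0) := fun a ha b hb hab => by
      have := hφmono ha hb hab
      have := hγanti ha hb hab
      simp only [hh]; linarith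
    have hh0 : h 0 < 0 := by simp [hh, hφ0, hγ0]; linarith
    set x₀ : ℝ := D * Sin / D₁ + 1 with hx₀
    have hx₀pos : 0 < x₀ := by positivity
    have hhx₀ : 0 < h x₀ := by
      have hφx₀ : lam0 < φ x₀ := by
        rw [← hφ0]; exact hφmono (mem_Ici.2 le_rfl) hx₀pos.le hx₀pos
      have hγx₀ : γ x₀ ≤ Sin - x₀ * D₁ / D := by
        rw [hγ]
        have : x₀ * D₁ ≤ x₀ * d x₀ := by
          apply mul_le_mul_of_nonneg_left (hdlow x₀ hx₀pos.le) hx₀pos.le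
        have h3 : x₀ * D₁ / D ≤ x₀ * d x₀ / D := by
          gcongr
        linarith
      have hbig : Sin < x₀ * D₁ / D := by
        rw [hx₀]
        rw [lt_div_iff₀ hD]
        have : (D * Sin / D₁ + 1) * D₁ = D * Sin + D₁ := by
          field_simp
        rw [this]
        nlinarith
      simp only [hh]
      nlinarith
    -- IVT on [0, x₀]
    have hsub : Icc (0:ℝ) x₀ ⊆ Ici 0 := Icc_subset_Ici_self
    have := intermediate_value_Icc hx₀pos.le (hhc.mono hsub)
    have h0mem : (0:ℝ) ∈ Icc (h 0) (h x₀) := ⟨hh0.le, hhx₀.le⟩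
    obtain ⟨c, hc, hc0⟩ := this h0mem
    have hcpos : 0 < c := by
      rcases eq_or_lt_of_le hc.1 with h | h
      · exfalso; rw [← h] at hc0; linarith
      · exact h
    refine ⟨c, ⟨hcpos, by simp only [hh] at hc0; linarith⟩, ?_⟩
    rintro y ⟨hy, hyeq⟩
    have hy0 : h y = 0 := by simp only [hh]; linarith
    have hc0' : h c = 0 := hc0
    exact hhmono.injOn hy.le (mem_Ici.2 hcpos.le) (hy0.trans hc0'.symm)
  · -- no solution when Sin < lam0
    rintro hlt ⟨x, hx, hxeq⟩
    have h1 : lam0 < φ x := by rw [← hφ0]; exact hφmono (mem_Ici.2 le_rfl) hx.le hx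
    have h2 : γ x < Sin := by rw [← hγ0]; exact hγanti (mem_Ici.2 le_rfl) hx.le hx
    linarith
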